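/- Let θ: P → Q be a homomorphism of integral (cancellative) commutative monoids such that the induced homomorphism of quotient monoids P/P* → Q/Q* (where P* denotes the submonoid of units) is an isomorphism. Then the induced homomorphism from the pushout P ⊕_{P*} Q* to Q is an isomorphism of monoids. -/

import Mathlib

/-- The congruence on a commutative monoid identifying two elements iff they agree
up to addition of units; the quotient is `M/M*`. -/
def modUnits (M : Type*) [AddCommMonoid M] : AddCon M where
  r x y := ∃ u v : M, IsAddUnit u ∧ IsAddUnit v ∧ x + u = y + v
  iseqv := by
    refine ⟨fun x => ⟨0, 0, isAddUnit_zero, isAddUnit_zero, rfl⟩, ?_, ?_⟩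
    · rintro x y ⟨u, v, hu, hv, h⟩
      exact ⟨v, u, hv, hu, h.symm⟩
    · rintro x y z ⟨u, v, hu, hv, h⟩ ⟨u', v', hu', hv', h'⟩
      refine ⟨u + u', v' + v, hu.add hu', hv'.add hv, ?_⟩
      calc x + (u + u') = x + u + u' := (add_assoc _ _ _).symm
        _ = y + v + u' := by rw [h]
        _ = y + u' + v := add_right_comm _ _ _
        _ = z + v' + v := by rw [h']
        _ = z + (v' + v) := add_assoc _ _ _
  add' := by
    rintro a b c d ⟨u, v, hu, hv, h⟩ ⟨s, t, hs, ht, h'⟩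
    refine ⟨u + s, v + t, hu.add hs, hv.add ht, ?_⟩
    calc a + c + (u + s) = (a + u) + (c + s) := add_add_add_comm _ _ _ _
      _ = (b + v) + (d + t) := by rw [h, h']
      _ = b + d + (v + t) := (add_add_add_comm _ _ _ _).symm

/-- The induced homomorphism `P/P* → Q/Q*`. -/
def inducedModUnits {P Q : Type*} [AddCommMonoid P] [AddCommMonoid Q] (θ : P →+ Q) :
    (modUnits P).Quotient →+ (modUnits Q).Quotient :=
  AddCon.lift _ ((modUnits Q).mk'.comp θ) (by
    rintro x y ⟨u, v, hu, hv, h⟩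
    simp only [AddCon.ker_rel, AddMonoidHom.comp_apply]
    refine (AddCon.eq _).mpr ⟨θ u, θ v, hu.map θ, hv.map θ, ?_⟩
    rw [← map_add, ← map_add, h])

/-- The submonoid of units (invertible elements) of a commutative monoid. -/
def unitsSubmonoid (Q : Type*) [AddCommMonoid Q] : AddSubmonoid Q where
  carrier := {x | IsAddUnit x}
  zero_mem' := isAddUnit_zero
  add_mem' := fun ha hb => ha.add hb

/-- The congruence presenting the pushout `P ⊕_{P*} Q*` of commutative monoids,
along the inclusion `P* → P` and the restriction `θ|_{P*} : P* → Q*`. -/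
def pushoutCon {P Q : Type*} [AddCommMonoid P] [AddCommMonoid Q] (θ : P →+ Q) :
    AddCon (P × unitsSubmonoid Q) :=
  addConGen fun a b => ∃ (u : P) (hu : IsAddUnit u),
    a = (u, 0) ∧ b = (0, ⟨θ u, hu.map θ⟩)

/-- The induced homomorphism `P ⊕_{P*} Q* → Q`, `(p, v) ↦ θ p + v`. -/
def pushoutToQ {P Q : Type*} [AddCommMonoid P] [AddCommMonoid Q] (θ : P →+ Q) :
    (pushoutCon θ).Quotient →+ Q :=
  AddCon.lift _ (θ.coprod (unitsSubmonoid Q).subtype) (by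
    refine AddCon.addConGen_le.2 ?_
    rintro a b ⟨u, hu, rfl, rfl⟩
    simp [AddCon.ker_rel])

/-- Let `θ : P → Q` be a homomorphism of integral commutative monoids such
that the induced homomorphism `P/P* → Q/Q*` is an isomorphism.  Then the induced
homomorphism from the pushout `P ⊕_{P*} Q*` to `Q` is an isomorphism of monoids. -/
theorem stmt0 {P Q : Type*} [AddCancelCommMonoid P] [AddCancelCommMonoid Q]
    (θ : P →+ Q) (hiso : Function.Bijective (inducedModUnits θ)) :
    Function.Bijective (pushoutToQ θ) := by
  have key : ∀ (u : P) (hu : IsAddUnit u),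
      ((⟨u, (0 : unitsSubmonoid Q)⟩ : P × unitsSubmonoid Q) : (pushoutCon θ).Quotient) =
      ((⟨0, ⟨θ u, hu.map θ⟩⟩ : P × unitsSubmonoid Q) : (pushoutCon θ).Quotient) :=
    fun u hu => (AddCon.eq _).mpr (AddConGen.Rel.of _ _ ⟨u, hu, rfl, rfl⟩)
  have coeadd : ∀ (p p' : P) (v v' : unitsSubmonoid Q),
      ((⟨p, v⟩ : P × unitsSubmonoid Q) : (pushoutCon θ).Quotient) +
      ((⟨p', v'⟩ : P × unitsSubmonoid Q) : (pushoutCon θ).Quotient) =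
      ((⟨p + p', v + v'⟩ : P × unitsSubmonoid Q) : (pushoutCon θ).Quotient) := fun _ _ _ _ => rfl
  have toQ : ∀ (p : P) (v : unitsSubmonoid Q),
      pushoutToQ θ ((⟨p, v⟩ : P × unitsSubmonoid Q) : (pushoutCon θ).Quotient) = θ p + v :=
    fun p v => rfl
  constructor
  · intro x y h
    induction x using AddCon.induction_on with | H x =>
    induction y using AddCon.induction_on with | H y =>
    obtain ⟨p, v⟩ := x
    obtain ⟨p', v'⟩ := y
    rw [toQ, toQ] at h
    -- θ p ≡ θ p' mod units, so p ≡ p' mod units by injectivity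
    have h1 : inducedModUnits θ (p : (modUnits P).Quotient) = inducedModUnits θ (p' : _) := by
      refine (AddCon.eq _).mpr ⟨v, v', v.2, v'.2, h⟩
    have h2 := hiso.1 h1
    obtain ⟨a, b, ha, hb, hab⟩ := (AddCon.eq _).mp h2
    obtain ⟨w, hw⟩ := (ha.map θ).exists_neg
    have hwu : IsAddUnit w := IsAddUnit.of_add_eq_zero (a := w) _ (by rwa [add_comm] at hw)
    set A : unitsSubmonoid Q := ⟨θ a, ha.map θ⟩
    set B : unitsSubmonoid Q := ⟨θ b, hb.map θ⟩
    set W : unitsSubmonoid Q := ⟨w, hwu⟩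
    have hAW : A + W = 0 := Subtype.ext hw
    -- v + B = v' + A
    have hvv : v + B = v' + A := by
      apply Subtype.ext
      have hθ : θ p + θ a = θ p' + θ b := by rw [← map_add, ← map_add, hab]
      have : (θ p + θ p') + (↑v + θ b) = (θ p + θ p') + (↑v' + θ a) := by
        calc (θ p + θ p') + (↑v + θ b) = (θ p + ↑v) + (θ p' + θ b) := by abel
          _ = (θ p' + ↑v') + (θ p + θ a) := by rw [h, ← hθ]
          _ = (θ p + θ p') + (↑v' + θ a) := by abel
      exact add_left_cancel this
    calc ((⟨p, v⟩ : P × unitsSubmonoid Q) : (pushoutCon θ).Quotient)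
        = (⟨p, v + A + W⟩ : P × unitsSubmonoid Q) := by rw [add_assoc, hAW, add_zero]
      _ = ((⟨p, v⟩ : P × unitsSubmonoid Q) : (pushoutCon θ).Quotient)
          + (⟨0, A⟩ : P × unitsSubmonoid Q) + (⟨0, W⟩ : P × unitsSubmonoid Q) := by
          rw [coeadd, coeadd]; simp
      _ = ((⟨p, v⟩ : P × unitsSubmonoid Q) : (pushoutCon θ).Quotient)
          + (⟨a, 0⟩ : P × unitsSubmonoid Q) + (⟨0, W⟩ : P × unitsSubmonoid Q) := by
          rw [key a ha]
      _ = (⟨p + a, v + W⟩ : P × unitsSubmonoid Q) := by rw [coeadd, coeadd]; simp [add_comm]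
      _ = (⟨p' + b, v + W⟩ : P × unitsSubmonoid Q) := by rw [hab]
      _ = ((⟨p', v⟩ : P × unitsSubmonoid Q) : (pushoutCon θ).Quotient)
          + (⟨b, 0⟩ : P × unitsSubmonoid Q) + (⟨0, W⟩ : P × unitsSubmonoid Q) := by
          rw [coeadd, coeadd]; simp [add_comm]
      _ = ((⟨p', v⟩ : P × unitsSubmonoid Q) : (pushoutCon θ).Quotient)
          + (⟨0, B⟩ : P × unitsSubmonoid Q) + (⟨0, W⟩ : P × unitsSubmonoid Q) := by
          rw [key b hb]
      _ = (⟨p', v + B + W⟩ : P × unitsSubmonoid Q) := by rw [coeadd, coeadd]; simp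
      _ = (⟨p', v'⟩ : P × unitsSubmonoid Q) := by
          rw [hvv, add_assoc, hAW, add_zero]
  · intro q
    obtain ⟨x, hx⟩ := hiso.2 ((q : (modUnits Q).Quotient))
    induction x using AddCon.induction_on with | H p =>
    have : inducedModUnits θ (p : (modUnits P).Quotient) = ((θ p : Q) : (modUnits Q).Quotient) := rfl
    rw [this] at hx
    obtain ⟨u, v, hu, hv, h⟩ := (AddCon.eq _).mp hx
    obtain ⟨w, hw⟩ := hv.exists_neg
    have hwu : IsAddUnit w := IsAddUnit.of_add_eq_zero (a := w) _ (by rwa [add_comm] at hw)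
    refine ⟨((⟨p, ⟨u + w, hu.add hwu⟩⟩ : P × unitsSubmonoid Q) : (pushoutCon θ).Quotient), ?_⟩
    show θ p + (u + w) = q
    calc θ p + (u + w) = (θ p + u) + w := (add_assoc _ _ _).symm
      _ = (q + v) + w := by rw [h]
      _ = q + (v + w) := add_assoc _ _ _
      _ = q := by rw [hw, add_zero]
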